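/- arXiv:2407.14084 — 2 statements merged into one kernel-verified Lean document; each statement's English description precedes it below -/
import Mathlib

section
/- In a simple graph whose edges are each colored red, green, or blue, with R red edges, G green edges, B blue edges, and T rainbow triangles (triangles with one edge of each color), one has T^2 ≤ 2·R·G·B. -/
set_option linter.unusedSectionVars false

/-- A triangle (as a 3-element vertex set) is rainbow: pairwise adjacent with three
distinct edge colors. -/
def Rainbow {V : Type*} [DecidableEq V] (G : SimpleGraph V) (c : Sym2 V → Fin 3) (t : Finset V) : Prop :=
  ∃ a b d : V, t = {a, b, d} ∧ G.Adj a b ∧ G.Adj b d ∧ G.Adj a d ∧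
    c s(a, b) ≠ c s(b, d) ∧ c s(b, d) ≠ c s(a, d) ∧ c s(a, b) ≠ c s(a, d)

open Finset

section
variable {V : Type*} [Fintype V] [DecidableEq V] (G : SimpleGraph V) [DecidableRel G.Adj]
  (c : Sym2 V → Fin 3)

/-- ordered rainbow triples: red s(a,b), green s(b,d), blue s(a,d) -/
def trip : Finset (V × V × V) :=
  univ.filter (fun x => G.Adj x.1 x.2.1 ∧ G.Adj x.2.1 x.2.2 ∧ G.Adj x.1 x.2.2 ∧
    c s(x.1, x.2.1) = 0 ∧ c s(x.2.1, x.2.2) = 1 ∧ c s(x.1, x.2.2) = 2)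

lemma mem_trip {x : V × V × V} : x ∈ trip G c ↔ G.Adj x.1 x.2.1 ∧ G.Adj x.2.1 x.2.2 ∧
    G.Adj x.1 x.2.2 ∧ c s(x.1, x.2.1) = 0 ∧ c s(x.2.1, x.2.2) = 1 ∧ c s(x.1, x.2.2) = 2 := by
  simp [trip]

end

set_option linter.unusedSectionVars false

section
variable {V : Type*} [Fintype V] [DecidableEq V] (G : SimpleGraph V) [DecidableRel G.Adj]
  (c : Sym2 V → Fin 3)

lemma fin3 (x : Fin 3) : x = 0 ∨ x = 1 ∨ x = 2 := by omega

lemma rainbow_eq_image :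
    {t : Finset V | Rainbow G c t} = (fun x : V × V × V => ({x.1, x.2.1, x.2.2} : Finset V)) '' ↑(trip G c) := by
  ext t
  simp only [Set.mem_setOf_eq, Set.mem_image, mem_coe, mem_trip]
  constructor
  · rintro ⟨a, b, d, ht, hab, hbd, had, h1, h2, h3⟩
    rcases fin3 (c s(a,b)) with r0 | r1 | r2 <;>
      rcases fin3 (c s(b,d)) with g0 | g1 | g2 <;>
      rcases fin3 (c s(a,d)) with b0 | b1 | b2 <;>
      simp_all only [ne_eq, not_true_eq_false, not_false_eq_true]
    · exact ⟨(a,b,d), ⟨hab, hbd, had, r0, g1, b2⟩, rfl⟩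
    · refine ⟨(b,a,d), ⟨hab.symm, had, hbd, by rwa [Sym2.eq_swap], b1, g2⟩, ?_⟩
      ext x; simp; tauto
    · refine ⟨(d,b,a), ⟨hbd.symm, hab.symm, had.symm, by rwa [Sym2.eq_swap],
        by rwa [Sym2.eq_swap], by rwa [Sym2.eq_swap]⟩, ?_⟩
      ext x; simp; tauto
    · refine ⟨(d,a,b), ⟨had.symm, hab, hbd.symm, by rwa [Sym2.eq_swap], r1,
        by rwa [Sym2.eq_swap]⟩, ?_⟩
      ext x; simp; tauto
    · refine ⟨(b,d,a), ⟨hbd, had.symm, hab.symm, g0, by rwa [Sym2.eq_swap],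
        by rwa [Sym2.eq_swap]⟩, ?_⟩
      ext x; simp; tauto
    · refine ⟨(a,d,b), ⟨had, hbd.symm, hab, b0, by rwa [Sym2.eq_swap], r2⟩, ?_⟩
      ext x; simp; tauto
  · rintro ⟨⟨a, b, d⟩, ⟨hab, hbd, had, h1, h2, h3⟩, ht⟩
    exact ⟨a, b, d, ht.symm, hab, hbd, had, by simp [h1, h2], by simp [h2, h3], by simp [h1, h3]⟩

lemma trip_injOn :
    Set.InjOn (fun x : V × V × V => ({x.1, x.2.1, x.2.2} : Finset V)) ↑(trip G c) := by
  rintro ⟨a, b, d⟩ hx ⟨e, f, h⟩ hy hset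
  simp only [mem_coe, mem_trip] at hx hy
  obtain ⟨hab, hbd, had, r1, g1, b1⟩ := hx
  obtain ⟨hef, hfh, heh, r2, g2, b2⟩ := hy
  simp only at hset r1 g1 b1 r2 g2 b2
  have hne1 := hab.ne; have hne2 := hbd.ne; have hne3 := had.ne
  have hne4 := hef.ne; have hne5 := hfh.ne; have hne6 := heh.ne
  have he : e = a ∨ e = b ∨ e = d := by
    have : e ∈ ({a,b,d} : Finset V) := by rw [hset]; simp
    simpa using this
  have hf : f = a ∨ f = b ∨ f = d := by
    have : f ∈ ({a,b,d} : Finset V) := by rw [hset]; simp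
    simpa using this
  have hh : h = a ∨ h = b ∨ h = d := by
    have : h ∈ ({a,b,d} : Finset V) := by rw [hset]; simp
    simpa using this
  rcases he with rfl | rfl | rfl <;> rcases hf with rfl | rfl | rfl <;>
    rcases hh with rfl | rfl | rfl <;>
    simp_all [Sym2.eq_swap, Prod.ext_iff]

lemma ncard_rainbow : {t : Finset V | Rainbow G c t}.ncard = (trip G c).card := by
  rw [rainbow_eq_image, Set.ncard_image_of_injOn (trip_injOn G c), Set.ncard_coe_finset]

/-- oriented red pairs -/
def redPairs : Finset (V × V) :=
  univ.filter (fun p : V × V => G.Adj p.1 p.2 ∧ c s(p.1, p.2) = 0)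

lemma ncard_color (i : Fin 3) :
    {e | e ∈ G.edgeSet ∧ c e = i}.ncard = (G.edgeFinset.filter (fun e => c e = i)).card := by
  rw [← Set.ncard_coe_finset]
  congr 1
  ext e
  simp [SimpleGraph.mem_edgeFinset]

lemma card_redPairs :
    (redPairs G c).card = 2 * (G.edgeFinset.filter (fun e => c e = 0)).card := by
  rw [Finset.card_eq_sum_card_fiberwise
    (f := fun p : V × V => s(p.1, p.2)) (t := G.edgeFinset.filter (fun e => c e = 0))
    (by rintro ⟨a, b⟩ hp
        simp only [redPairs, mem_coe, mem_filter, mem_univ, true_and] at hp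
        simp [SimpleGraph.mem_edgeFinset, hp.1, hp.2])]
  rw [Finset.sum_congr rfl (g := fun _ => 2), Finset.sum_const, smul_eq_mul, mul_comm]
  intro e he
  induction e with
  | _ x y =>
    simp only [mem_filter, SimpleGraph.mem_edgeFinset, SimpleGraph.mem_edgeSet] at he
    have hxy : x ≠ y := he.1.ne
    have : (redPairs G c).filter (fun p => s(p.1, p.2) = s(x, y)) = {(x, y), (y, x)} := by
      ext ⟨u, v⟩
      simp only [mem_filter, redPairs, mem_univ, true_and, mem_insert, mem_singleton,
        Prod.mk.injEq, Sym2.eq_iff]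
      constructor
      · rintro ⟨-, hs⟩; tauto
      · rintro (⟨rfl, rfl⟩ | ⟨rfl, rfl⟩)
        · exact ⟨⟨he.1, he.2⟩, Or.inl ⟨rfl, rfl⟩⟩
        · exact ⟨⟨he.1.symm, by rw [Sym2.eq_swap]; exact he.2⟩, Or.inr ⟨rfl, rfl⟩⟩
    rw [this, card_insert_of_notMem (by simp [Prod.ext_iff, hxy]), card_singleton]

lemma trip_card_fiberwise :
    (trip G c).card = ∑ p ∈ redPairs G c, ((trip G c).filter (fun x => (x.1, x.2.1) = p)).card := by
  apply Finset.card_eq_sum_card_fiberwise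
  intro x hx
  rw [mem_coe, mem_trip] at hx
  simp [redPairs, hx.1, hx.2.2.2.1]

/-- pairs of rainbow triples sharing the same oriented red pair -/
def tripPairs : Finset ((V × V × V) × (V × V × V)) :=
  ((trip G c) ×ˢ (trip G c)).filter (fun q => q.1.1 = q.2.1 ∧ q.1.2.1 = q.2.2.1)

lemma sum_sq_fibers :
    ∑ p ∈ redPairs G c, ((trip G c).filter (fun x => (x.1, x.2.1) = p)).card ^ 2
      = (tripPairs G c).card := by
  rw [Finset.card_eq_sum_card_fiberwise (f := fun q => (q.1.1, q.1.2.1)) (t := redPairs G c)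
    (by rintro ⟨x, y⟩ hq
        simp only [tripPairs, mem_coe, mem_filter, mem_product, mem_trip] at hq
        simp [redPairs, hq.1.1.1, hq.1.1.2.2.2.1])]
  apply Finset.sum_congr rfl
  intro p hp
  have : (tripPairs G c).filter (fun q => (q.1.1, q.1.2.1) = p)
      = ((trip G c).filter (fun x => (x.1, x.2.1) = p)) ×ˢ
        ((trip G c).filter (fun x => (x.1, x.2.1) = p)) := by
    ext ⟨x, y⟩
    simp only [tripPairs, mem_filter, mem_product, Prod.ext_iff]
    constructor
    · rintro ⟨⟨⟨hx, hy⟩, h1, h2⟩, h3, h4⟩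
      exact ⟨⟨hx, h3, h4⟩, hy, h1 ▸ h3, h2 ▸ h4⟩
    · rintro ⟨⟨hx, h3, h4⟩, hy, h5, h6⟩
      exact ⟨⟨⟨hx, hy⟩, h3.trans h5.symm, h4.trans h6.symm⟩, h3, h4⟩
  rw [this, Finset.card_product, sq]

lemma tripPairs_card_le :
    (tripPairs G c).card ≤ (G.edgeFinset.filter (fun e => c e = 1)).card *
      (G.edgeFinset.filter (fun e => c e = 2)).card := by
  rw [← Finset.card_product]
  apply Finset.card_le_card_of_injOn
    (fun q => (s(q.1.2.1, q.1.2.2), s(q.2.1, q.2.2.2)))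
  · rintro ⟨⟨a, b, d⟩, ⟨a', b', d'⟩⟩ hq
    simp only [tripPairs, mem_coe, mem_filter, mem_product, mem_trip] at hq
    obtain ⟨⟨hx, hy⟩, -, -⟩ := hq
    simp only [mem_coe, mem_product, mem_filter, SimpleGraph.mem_edgeFinset, SimpleGraph.mem_edgeSet]
    exact ⟨⟨hx.2.1, hx.2.2.2.2.1⟩, hy.2.2.1, hy.2.2.2.2.2⟩
  · rintro ⟨⟨a, b, d⟩, ⟨a', b', d'⟩⟩ hq ⟨⟨e, f, h⟩, ⟨e', f', h'⟩⟩ hq' heq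
    simp only [tripPairs, mem_coe, mem_filter, mem_product, mem_trip] at hq hq'
    obtain ⟨⟨hx, hy⟩, h1, h2⟩ := hq
    obtain ⟨⟨hx', hy'⟩, h1', h2'⟩ := hq'
    simp only at h1 h2 h1' h2' hx hy hx' hy' heq
    subst h1 h2 h1' h2'
    obtain ⟨-, -, -, r1, g1, b1⟩ := hx
    obtain ⟨-, -, -, r2, g2, b2⟩ := hy
    obtain ⟨-, -, -, r3, g3, b3⟩ := hx'
    obtain ⟨-, -, -, r4, g4, b4⟩ := hy'
    rw [Prod.mk.injEq, Sym2.eq_iff, Sym2.eq_iff] at heq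
    obtain ⟨hg | hg, hb | hb⟩ := heq <;>
      obtain ⟨rfl, rfl⟩ := hg <;> obtain ⟨rfl, rfl⟩ := hb <;>
      simp_all [Sym2.eq_swap, Prod.ext_iff]

end

theorem rainbow_triangle_bound {V : Type*} [Fintype V] [DecidableEq V]
    (G : SimpleGraph V) (c : Sym2 V → Fin 3) (R Gr B T : ℕ)
    (hR : R = {e | e ∈ G.edgeSet ∧ c e = 0}.ncard)
    (hG : Gr = {e | e ∈ G.edgeSet ∧ c e = 1}.ncard)
    (hB : B = {e | e ∈ G.edgeSet ∧ c e = 2}.ncard)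
    (hT : T = {t : Finset V | Rainbow G c t}.ncard) :
    T ^ 2 ≤ 2 * R * Gr * B := by
  classical
  haveI : DecidableRel G.Adj := Classical.decRel _
  rw [hT, ncard_rainbow, hR, hG, hB, ncard_color, ncard_color, ncard_color]
  set Rc := (G.edgeFinset.filter (fun e => c e = 0)).card with hRc
  set Gc := (G.edgeFinset.filter (fun e => c e = 1)).card with hGc
  set Bc := (G.edgeFinset.filter (fun e => c e = 2)).card with hBc
  have cs : ((trip G c).card : ℚ) ^ 2 ≤ (redPairs G c).card *
      ∑ p ∈ redPairs G c, (((trip G c).filter (fun x => (x.1, x.2.1) = p)).card : ℚ) ^ 2 := by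
    rw [trip_card_fiberwise G c]
    push_cast
    exact sq_sum_le_card_mul_sum_sq
  have cs' : (trip G c).card ^ 2 ≤ (redPairs G c).card *
      ∑ p ∈ redPairs G c, ((trip G c).filter (fun x => (x.1, x.2.1) = p)).card ^ 2 := by
    exact_mod_cast (by push_cast; exact cs :
      ((trip G c).card ^ 2 : ℚ) ≤ ((redPairs G c).card *
        ∑ p ∈ redPairs G c, ((trip G c).filter (fun x => (x.1, x.2.1) = p)).card ^ 2 : ℕ))
  calc (trip G c).card ^ 2
      ≤ (redPairs G c).card *
        ∑ p ∈ redPairs G c, ((trip G c).filter (fun x => (x.1, x.2.1) = p)).card ^ 2 := cs'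
    _ = 2 * Rc * (tripPairs G c).card := by
        rw [card_redPairs, sum_sq_fibers]
    _ ≤ 2 * Rc * (Gc * Bc) := Nat.mul_le_mul_left _ (tripPairs_card_le G c)
    _ = 2 * Rc * Gc * Bc := by ring
end

section
/- In a simple graph where every edge is colored red, green, or blue, if every triangle is rainbow and there are R red, G green, B blue edges and T triangles, then T ≤ √(2·R·G·B). -/
def IsTriangle {V : Type*} [DecidableEq V] (G : SimpleGraph V) (t : Finset V) : Prop :=
  ∃ a b d : V, t = {a, b, d} ∧ G.Adj a b ∧ G.Adj b d ∧ G.Adj a d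

open Finset

section Aux
open Classical
variable {V : Type*} [Fintype V] [DecidableEq V] (G : SimpleGraph V) (c : Sym2 V → Fin 3)

-- membership of pairs in the triple of edges
lemma pair_mem_edges {a b d x y : V} (hx : x ∈ ({a,b,d} : Finset V))
    (hy : y ∈ ({a,b,d} : Finset V)) (hxy : x ≠ y) :
    s(x,y) = s(a,b) ∨ s(x,y) = s(b,d) ∨ s(x,y) = s(a,d) := by
  simp only [mem_insert, mem_singleton] at hx hy
  rcases hx with rfl | rfl | rfl <;> rcases hy with rfl | rfl | rfl <;>
    simp_all [Sym2.eq_iff] <;> tauto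

lemma key_rainbow (hall : ∀ t : Finset V, IsTriangle G t → Rainbow G c t)
    {u v w : V} (huv : G.Adj u v) (hvw : G.Adj v w) (huw : G.Adj u w) :
    c s(u,v) ≠ c s(v,w) ∧ c s(v,w) ≠ c s(u,w) ∧ c s(u,v) ≠ c s(u,w) := by
  obtain ⟨a, b, d, ht, hab, hbd, had, h1, h2, h3⟩ :=
    hall {u,v,w} ⟨u, v, w, rfl, huv, hvw, huw⟩
  -- pairwise distinct colors on the three edges of {a,b,d}
  have hdistinct : ∀ e f : Sym2 V,
      (e = s(a,b) ∨ e = s(b,d) ∨ e = s(a,d)) →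
      (f = s(a,b) ∨ f = s(b,d) ∨ f = s(a,d)) → e ≠ f → c e ≠ c f := by
    rintro e f (rfl|rfl|rfl) (rfl|rfl|rfl) hne <;> first
      | exact absurd rfl hne
      | assumption
      | (exact fun h => (by simp_all : False))
  have hu : u ∈ ({a,b,d} : Finset V) := by rw [← ht]; simp
  have hv : v ∈ ({a,b,d} : Finset V) := by rw [← ht]; simp
  have hw : w ∈ ({a,b,d} : Finset V) := by rw [← ht]; simp
  have e1 := pair_mem_edges hu hv huv.ne
  have e2 := pair_mem_edges hv hw hvw.ne
  have e3 := pair_mem_edges hu hw huw.ne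
  refine ⟨hdistinct _ _ e1 e2 ?_, hdistinct _ _ e2 e3 ?_, hdistinct _ _ e1 e3 ?_⟩ <;>
    simp [Sym2.eq_iff, huv.ne, hvw.ne, huw.ne, huv.ne', hvw.ne', huw.ne']

lemma color_split (hall : ∀ t : Finset V, IsTriangle G t → Rainbow G c t)
    {u v x : V} (huv : G.Adj u v) (hgreen : c s(u,v) = 1)
    (hux : G.Adj u x) (hvx : G.Adj v x) :
    (c s(u,x) = 0 ∧ c s(v,x) = 2) ∨ (c s(u,x) = 2 ∧ c s(v,x) = 0) := by
  obtain ⟨h1, h2, h3⟩ := key_rainbow G c hall huv hvx hux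
  have a1 := (c s(u,x)).isLt
  have a2 := (c s(v,x)).isLt
  simp only [Ne, Fin.ext_iff, Fin.val_one, Fin.val_zero] at h1 h2 h3 hgreen ⊢
  have : ((2 : Fin 3) : ℕ) = 2 := rfl
  rw [this]
  omega

noncomputable def OG : Finset (V × V) :=
  univ.filter (fun p => G.Adj p.1 p.2 ∧ c s(p.1, p.2) = 1)

noncomputable def OT : Finset (V × V × V) :=
  univ.filter (fun p => G.Adj p.1 p.2.1 ∧ c s(p.1, p.2.1) = 1 ∧
    G.Adj p.1 p.2.2 ∧ G.Adj p.2.1 p.2.2)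

noncomputable def Qd : Finset (V × V × V × V) :=
  univ.filter (fun p => G.Adj p.1 p.2.1 ∧ c s(p.1, p.2.1) = 1 ∧
    G.Adj p.1 p.2.2.1 ∧ G.Adj p.2.1 p.2.2.1 ∧
    G.Adj p.1 p.2.2.2 ∧ G.Adj p.2.1 p.2.2.2 ∧
    c s(p.1, p.2.2.1) = 0 ∧ c s(p.1, p.2.2.2) = 0)

noncomputable def ncn (u v : V) : ℕ :=
  (univ.filter (fun x => G.Adj u x ∧ G.Adj v x)).card

noncomputable def acn (u v : V) : ℕ :=
  (univ.filter (fun x => G.Adj u x ∧ G.Adj v x ∧ c s(u,x) = 0)).card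

noncomputable def triF : Finset (Finset V) := univ.filter (fun t => IsTriangle G t)

noncomputable def colF (i : Fin 3) : Finset (Sym2 V) :=
  univ.filter (fun e => e ∈ G.edgeSet ∧ c e = i)

lemma ncn_split (hall : ∀ t : Finset V, IsTriangle G t → Rainbow G c t)
    {u v : V} (huv : G.Adj u v) (hgreen : c s(u,v) = 1) :
    ncn G u v = acn G c u v + acn G c v u := by
  classical
  have key := Finset.card_filter_add_card_filter_not
    (s := univ.filter (fun x => G.Adj u x ∧ G.Adj v x))
    (p := fun x => c s(u,x) = 0)
  rw [Finset.filter_filter, Finset.filter_filter] at key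
  have e1 : (univ.filter (fun x => (G.Adj u x ∧ G.Adj v x) ∧ c s(u,x) = 0))
      = univ.filter (fun x => G.Adj u x ∧ G.Adj v x ∧ c s(u,x) = 0) := by
    apply Finset.filter_congr; intro x _; tauto
  have e2 : (univ.filter (fun x => (G.Adj u x ∧ G.Adj v x) ∧ ¬ c s(u,x) = 0))
      = univ.filter (fun x => G.Adj v x ∧ G.Adj u x ∧ c s(v,x) = 0) := by
    apply Finset.filter_congr; intro x _
    constructor
    · rintro ⟨⟨hux, hvx⟩, hne⟩
      rcases color_split G c hall huv hgreen hux hvx with ⟨h0, _⟩ | ⟨_, h0⟩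
      · exact absurd h0 hne
      · exact ⟨hvx, hux, h0⟩
    · rintro ⟨hvx, hux, h0⟩
      refine ⟨⟨hux, hvx⟩, ?_⟩
      rcases color_split G c hall huv hgreen hux hvx with ⟨_, h2⟩ | ⟨h2, _⟩
      · rw [h0] at h2; exact absurd h2 (by decide)
      · rw [h2]; decide
  rw [e1, e2] at key
  unfold ncn acn
  omega

lemma OG_card : (OG G c).card = 2 * (colF G c 1).card := by
  classical
  rw [Finset.card_eq_sum_card_fiberwise
    (f := fun p : V × V => s(p.1, p.2)) (t := colF G c 1) ?_]
  · rw [Finset.sum_congr rfl (g := fun _ => 2) ?_, Finset.sum_const, smul_eq_mul, mul_comm]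
    intro e
    induction e using Sym2.ind with
    | _ u v =>
      intro he
      simp only [colF, mem_filter, SimpleGraph.mem_edgeSet] at he
      obtain ⟨_, huv, hc⟩ := he
      have hfib : ((OG G c).filter (fun p => s(p.1, p.2) = s(u,v)))
          = {(u,v), (v,u)} := by
        ext ⟨p1, p2⟩
        simp only [OG, mem_filter, mem_univ, true_and, Finset.mem_insert,
          Finset.mem_singleton, Sym2.eq_iff, Prod.mk.injEq]
        constructor
        · rintro ⟨⟨hadj, hcc⟩, (⟨rfl, rfl⟩ | ⟨rfl, rfl⟩)⟩
          · left; exact ⟨rfl, rfl⟩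
          · right; exact ⟨rfl, rfl⟩
        · rintro (⟨rfl, rfl⟩ | ⟨rfl, rfl⟩)
          · exact ⟨⟨huv, hc⟩, Or.inl ⟨rfl, rfl⟩⟩
          · refine ⟨⟨huv.symm, ?_⟩, Or.inr ⟨rfl, rfl⟩⟩
            rw [Sym2.eq_swap]; exact hc
      rw [hfib, Finset.card_insert_of_notMem, Finset.card_singleton]
      simp only [Finset.mem_singleton, Prod.mk.injEq, not_and]
      intro h; exact absurd h huv.ne
  · intro p hp
    simp only [mem_coe, OG, mem_filter, mem_univ, true_and] at hp
    simp only [mem_coe, colF, mem_filter, mem_univ, true_and, SimpleGraph.mem_edgeSet]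
    exact ⟨hp.1, hp.2⟩

lemma OT_card_sum : (OT G c).card = ∑ p ∈ OG G c, ncn G p.1 p.2 := by
  classical
  rw [Finset.card_eq_sum_card_fiberwise
    (f := fun p : V × V × V => (p.1, p.2.1)) (t := OG G c) ?_]
  · refine Finset.sum_congr rfl ?_
    rintro ⟨u, v⟩ hq
    simp only [OG, mem_filter, mem_univ, true_and] at hq
    apply Finset.card_nbij' (i := fun p => p.2.2) (j := fun x => (u, v, x))
    · rintro ⟨a, b, x⟩ hp
      rw [mem_coe, mem_filter] at hp
      obtain ⟨hmem, heq⟩ := hp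
      simp only [Prod.mk.injEq] at heq
      obtain ⟨rfl, rfl⟩ := heq
      simp only [OT, mem_filter, mem_univ, true_and] at hmem
      simp only [mem_coe, ncn, mem_filter, mem_univ, true_and]
      exact ⟨hmem.2.2.1, hmem.2.2.2⟩
    · intro x hx
      simp only [mem_coe, ncn, mem_filter, mem_univ, true_and] at hx
      rw [mem_coe, mem_filter]
      refine ⟨?_, rfl⟩
      simp only [OT, mem_filter, mem_univ, true_and]
      exact ⟨hq.1, hq.2, hx.1, hx.2⟩
    · rintro ⟨a, b, x⟩ hp
      rw [mem_coe, mem_filter] at hp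
      obtain ⟨hmem, heq⟩ := hp
      simp only [Prod.mk.injEq] at heq
      obtain ⟨rfl, rfl⟩ := heq
      rfl
    · intro x hx; rfl
  · rintro ⟨a, b, x⟩ hp
    simp only [mem_coe, OT, mem_filter, mem_univ, true_and] at hp
    simp only [mem_coe, OG, mem_filter, mem_univ, true_and]
    exact ⟨hp.1, hp.2.1⟩

lemma Qd_card_sum : (Qd G c).card = ∑ p ∈ OG G c, (acn G c p.1 p.2) ^ 2 := by
  classical
  rw [Finset.card_eq_sum_card_fiberwise
    (f := fun p : V × V × V × V => (p.1, p.2.1)) (t := OG G c) ?_]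
  · refine Finset.sum_congr rfl ?_
    rintro ⟨u, v⟩ hq
    simp only [OG, mem_filter, mem_univ, true_and] at hq
    have hsq : ((univ.filter (fun x => G.Adj u x ∧ G.Adj v x ∧ c s(u,x) = 0)) ×ˢ
        (univ.filter (fun x => G.Adj u x ∧ G.Adj v x ∧ c s(u,x) = 0))).card
        = (acn G c u v) ^ 2 := by
      rw [Finset.card_product, acn, sq]
    rw [← hsq]
    apply Finset.card_nbij' (i := fun p => (p.2.2.1, p.2.2.2))
      (j := fun x => (u, v, x.1, x.2))
    · rintro ⟨a, b, x1, x2⟩ hp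
      rw [mem_coe, mem_filter] at hp
      obtain ⟨hmem, heq⟩ := hp
      simp only [Prod.mk.injEq] at heq
      obtain ⟨rfl, rfl⟩ := heq
      simp only [Qd, mem_filter, mem_univ, true_and] at hmem
      simp only [mem_coe, Finset.mem_product, mem_filter, mem_univ, true_and]
      exact ⟨⟨hmem.2.2.1, hmem.2.2.2.1, hmem.2.2.2.2.2.2.1⟩,
        ⟨hmem.2.2.2.2.1, hmem.2.2.2.2.2.1, hmem.2.2.2.2.2.2.2⟩⟩
    · rintro ⟨x1, x2⟩ hx
      simp only [Finset.mem_coe, Finset.mem_product, mem_filter, mem_univ, true_and] at hx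
      rw [mem_coe, mem_filter]
      refine ⟨?_, rfl⟩
      simp only [Qd, mem_filter, mem_univ, true_and]
      exact ⟨hq.1, hq.2, hx.1.1, hx.1.2.1, hx.2.1, hx.2.2.1, hx.1.2.2, hx.2.2.2⟩
    · rintro ⟨a, b, x1, x2⟩ hp
      rw [mem_coe, mem_filter] at hp
      obtain ⟨hmem, heq⟩ := hp
      simp only [Prod.mk.injEq] at heq
      obtain ⟨rfl, rfl⟩ := heq
      rfl
    · rintro ⟨x1, x2⟩ hx; rfl
  · rintro ⟨a, b, x1, x2⟩ hp
    simp only [mem_coe, Qd, mem_filter, mem_univ, true_and] at hp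
    simp only [mem_coe, OG, mem_filter, mem_univ, true_and]
    exact ⟨hp.1, hp.2.1⟩


lemma Qd_card_le (hall : ∀ t : Finset V, IsTriangle G t → Rainbow G c t) :
    (Qd G c).card ≤ (colF G c 0).card * (colF G c 2).card := by
  classical
  rw [← Finset.card_product]
  apply Finset.card_le_card_of_injOn
    (f := fun p => (s(p.1, p.2.2.1), s(p.2.1, p.2.2.2)))
  · rintro ⟨u, v, x1, x2⟩ hp
    simp only [mem_coe, Qd, mem_filter, mem_univ, true_and] at hp
    obtain ⟨huv, hg, hux1, hvx1, hux2, hvx2, hc1, hc2⟩ := hp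
    have hb2 : c s(v, x2) = 2 := by
      rcases color_split G c hall huv hg hux2 hvx2 with ⟨_, hb⟩ | ⟨ha, _⟩
      · exact hb
      · rw [hc2] at ha; exact absurd ha (by decide)
    simp only [mem_coe, Finset.mem_product, colF, mem_filter, mem_univ, true_and,
      SimpleGraph.mem_edgeSet]
    exact ⟨⟨hux1, hc1⟩, ⟨hvx2, hb2⟩⟩
  · rintro ⟨u, v, x1, x2⟩ hp ⟨u', v', x1', x2'⟩ hq heq
    simp only [coe_filter, Set.mem_setOf_eq, Qd, mem_univ, true_and] at hp hq
    obtain ⟨huv, hg, hux1, hvx1, hux2, hvx2, hc1, hc2⟩ := hp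
    obtain ⟨huv', hg', hux1', hvx1', hux2', hvx2', hc1', hc2'⟩ := hq
    have hb1 : c s(v, x1) = 2 := by
      rcases color_split G c hall huv hg hux1 hvx1 with ⟨_, hb⟩ | ⟨ha, _⟩
      · exact hb
      · rw [hc1] at ha; exact absurd ha (by decide)
    have hb2' : c s(v', x2') = 2 := by
      rcases color_split G c hall huv' hg' hux2' hvx2' with ⟨_, hb⟩ | ⟨ha, _⟩
      · exact hb
      · rw [hc2'] at ha; exact absurd ha (by decide)
    simp only [Prod.mk.injEq, Sym2.eq_iff] at heq
    obtain ⟨e1, e2⟩ := heq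
    rcases e1 with ⟨h1a, h1b⟩ | ⟨h1a, h1b⟩ <;> rcases e2 with ⟨h2a, h2b⟩ | ⟨h2a, h2b⟩
    · subst h1a; subst h1b; subst h2a; subst h2b; rfl
    · -- u = u', x1 = x1', v = x2', x2 = v'
      subst h1a; subst h2a; subst h2b
      -- hc2' : c s(u, x2') = 0 where x2' = v : c s(u,v) = 0 vs hg : = 1
      exact absurd (hc2'.symm.trans hg) (by decide)
    · -- u = x1', x1 = u', v = v', x2 = x2'
      subst h1a; subst h1b; subst h2a; subst h2b
      -- hb1' : c s(v, x1') = 2 with x1' = u : c s(v,u) = 2 vs c s(u,v) = 1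
      have hb1'' : c s(v, u) = 2 := by
        rcases color_split G c hall huv' hg' hux1' hvx1' with ⟨_, hb⟩ | ⟨ha, _⟩
        · exact hb
        · rw [hc1'] at ha; exact absurd ha (by decide)
      rw [Sym2.eq_swap] at hb1''
      exact absurd (hg.symm.trans hb1'') (by decide)
    · -- u = x1', x1 = u', v = x2', x2 = v'
      subst h1a; subst h2a; subst h1b; subst h2b
      -- hc2' : c s(u', x2') = 0, u' = x1, x2' = v : c s(x1, v) = 0 vs hb1 : c s(v,x1) = 2
      rw [Sym2.eq_swap] at hc2'
      exact absurd (hb1.symm.trans hc2') (by decide)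

lemma fiber_eq {x y z : V} (hxy : G.Adj x y) (hyz : G.Adj y z) (hxz : G.Adj x z)
    (h1 : c s(x,y) = 1) (h2 : c s(y,z) ≠ 1) (h3 : c s(x,z) ≠ 1) :
    (OT G c).filter (fun p => ({p.1, p.2.1, p.2.2} : Finset V) = {x, y, z})
      = {(x,y,z), (y,x,z)} := by
  classical
  have h1' : c s(y,x) = 1 := by rw [Sym2.eq_swap]; exact h1
  have h2' : c s(z,y) ≠ 1 := by rw [Sym2.eq_swap]; exact h2
  have h3' : c s(z,x) ≠ 1 := by rw [Sym2.eq_swap]; exact h3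
  ext ⟨u, v, w⟩
  simp only [mem_filter, OT, mem_univ, true_and, Finset.mem_insert, Finset.mem_singleton,
    Prod.mk.injEq]
  constructor
  · rintro ⟨⟨huv, hg, huw, hvw⟩, hset⟩
    have hu : u ∈ ({x,y,z} : Finset V) := by rw [← hset]; simp
    have hv : v ∈ ({x,y,z} : Finset V) := by rw [← hset]; simp
    have hw : w ∈ ({x,y,z} : Finset V) := by rw [← hset]; simp
    simp only [Finset.mem_insert, Finset.mem_singleton] at hu hv hw
    have nuv := huv.ne; have nuw := huw.ne; have nvw := hvw.ne
    rcases hu with rfl | rfl | rfl <;> rcases hv with rfl | rfl | rfl <;>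
      rcases hw with rfl | rfl | rfl <;> simp_all
  · rintro (⟨rfl, rfl, rfl⟩ | ⟨rfl, rfl, rfl⟩)
    · exact ⟨⟨hxy, h1, hxz, hyz⟩, rfl⟩
    · refine ⟨⟨hxy.symm, h1', hyz, hxz⟩, ?_⟩
      ext a; simp; tauto

lemma OT_card_tri (hall : ∀ t : Finset V, IsTriangle G t → Rainbow G c t) :
    (OT G c).card = 2 * (triF G).card := by
  classical
  rw [Finset.card_eq_sum_card_fiberwise
    (f := fun p : V × V × V => ({p.1, p.2.1, p.2.2} : Finset V)) (t := triF G) ?_]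
  · rw [Finset.sum_congr rfl (g := fun _ => 2) ?_, Finset.sum_const, smul_eq_mul, mul_comm]
    intro t ht
    simp only [triF, mem_filter, mem_univ, true_and] at ht
    obtain ⟨a, b, d, rfl, hab, hbd, had⟩ := ht
    obtain ⟨k1, k2, k3⟩ := key_rainbow G c hall hab hbd had
    have htri : c s(a,b) = 1 ∨ c s(b,d) = 1 ∨ c s(a,d) = 1 := by
      have b1 := (c s(a,b)).isLt; have b2 := (c s(b,d)).isLt; have b3 := (c s(a,d)).isLt
      simp only [Ne, Fin.ext_iff, Fin.val_one] at k1 k2 k3 ⊢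
      omega
    rcases htri with hg | hg | hg
    · rw [fiber_eq G c hab hbd had hg (fun h => k1 (hg.trans h.symm))
        (fun h => k3 (hg.trans h.symm))]
      rw [Finset.card_insert_of_notMem (by simp [hab.ne]), Finset.card_singleton]
    · have hset : ({a,b,d} : Finset V) = {b,d,a} := by ext; simp; tauto
      rw [hset, fiber_eq G c hbd had.symm hab.symm hg ?_ ?_]
      · rw [Finset.card_insert_of_notMem (by simp [hbd.ne]), Finset.card_singleton]
      · rw [Sym2.eq_swap]
        exact fun h => k2 (hg.trans h.symm)
      · rw [Sym2.eq_swap]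
        exact fun h => k1 (h.trans hg.symm)
    · have hset : ({a,b,d} : Finset V) = {a,d,b} := by ext; simp; tauto
      rw [hset, fiber_eq G c had hbd.symm hab hg ?_ ?_]
      · rw [Finset.card_insert_of_notMem (by simp [had.ne]), Finset.card_singleton]
      · rw [Sym2.eq_swap]
        exact fun h => k2 (h.trans hg.symm)
      · exact fun h => k3 (h.trans hg.symm)
  · rintro ⟨u, v, w⟩ hp
    simp only [mem_coe, OT, mem_filter, mem_univ, true_and] at hp
    simp only [mem_coe, triF, mem_filter, mem_univ, true_and]
    exact ⟨u, v, w, rfl, hp.1, hp.2.2.2, hp.2.2.1⟩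

lemma OG_swap_mem {p : V × V} (hp : p ∈ OG G c) : p.swap ∈ OG G c := by
  simp only [OG, mem_filter, mem_univ, true_and] at hp ⊢
  exact ⟨hp.1.symm, by rw [Prod.snd_swap, Prod.fst_swap, Sym2.eq_swap]; exact hp.2⟩

lemma acn_swap_sum :
    ∑ p ∈ OG G c, (acn G c p.2 p.1) ^ 2 = ∑ p ∈ OG G c, (acn G c p.1 p.2) ^ 2 := by
  exact Finset.sum_nbij' (i := Prod.swap) (j := Prod.swap)
    (fun p hp => OG_swap_mem G c hp) (fun p hp => OG_swap_mem G c hp)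
    (fun p _ => Prod.swap_swap p) (fun p _ => Prod.swap_swap p)
    (fun p _ => rfl)

lemma sum_sq_le (hall : ∀ t : Finset V, IsTriangle G t → Rainbow G c t) :
    ∑ p ∈ OG G c, (ncn G p.1 p.2) ^ 2 ≤ 4 * (Qd G c).card := by
  classical
  have step : ∀ p ∈ OG G c,
      (ncn G p.1 p.2) ^ 2 ≤ 2 * ((acn G c p.1 p.2) ^ 2 + (acn G c p.2 p.1) ^ 2) := by
    rintro ⟨u, v⟩ hp
    simp only [OG, mem_filter, mem_univ, true_and] at hp
    rw [ncn_split G c hall hp.1 hp.2]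
    have h : ((acn G c u v : ℤ) + acn G c v u) ^ 2
        ≤ 2 * ((acn G c u v : ℤ) ^ 2 + (acn G c v u : ℤ) ^ 2) := by
      nlinarith [sq_nonneg ((acn G c u v : ℤ) - acn G c v u)]
    exact_mod_cast h
  calc ∑ p ∈ OG G c, (ncn G p.1 p.2) ^ 2
      ≤ ∑ p ∈ OG G c, 2 * ((acn G c p.1 p.2) ^ 2 + (acn G c p.2 p.1) ^ 2) :=
        Finset.sum_le_sum step
    _ = 2 * (∑ p ∈ OG G c, (acn G c p.1 p.2) ^ 2 + ∑ p ∈ OG G c, (acn G c p.2 p.1) ^ 2) := by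
        rw [← Finset.mul_sum, Finset.sum_add_distrib]
    _ = 4 * (Qd G c).card := by
        rw [acn_swap_sum, ← Qd_card_sum]; ring
end Aux

theorem triangle_bound_all_rainbow {V : Type*} [Fintype V] [DecidableEq V]
    (G : SimpleGraph V) (c : Sym2 V → Fin 3) (R Gr B T : ℕ)
    (hall : ∀ t : Finset V, IsTriangle G t → Rainbow G c t)
    (hR : R = {e | e ∈ G.edgeSet ∧ c e = 0}.ncard)
    (hG : Gr = {e | e ∈ G.edgeSet ∧ c e = 1}.ncard)
    (hB : B = {e | e ∈ G.edgeSet ∧ c e = 2}.ncard)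
    (hT : T = {t : Finset V | IsTriangle G t}.ncard) :
    (T : ℝ) ≤ Real.sqrt (2 * R * Gr * B) := by
  classical
  have hT' : T = (triF G).card := by
    have : {t : Finset V | IsTriangle G t} = ↑(triF G) := by
      ext t; simp [triF]
    rw [hT, this, Set.ncard_coe_finset]
  have hcol : ∀ i : Fin 3, {e | e ∈ G.edgeSet ∧ c e = i}.ncard = (colF G c i).card := by
    intro i
    have : {e | e ∈ G.edgeSet ∧ c e = i} = ↑(colF G c i) := by
      ext e; simp [colF]
    rw [this, Set.ncard_coe_finset]
  rw [hcol 0] at hR; rw [hcol 1] at hG; rw [hcol 2] at hB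
  -- Cauchy–Schwarz over ℕ
  have cauchy : (OT G c).card ^ 2 ≤ (OG G c).card * ∑ p ∈ OG G c, (ncn G p.1 p.2) ^ 2 := by
    rw [OT_card_sum]
    exact sq_sum_le_card_mul_sum_sq
  have h1 : (OT G c).card = 2 * T := by rw [OT_card_tri G c hall, hT']
  have h2 : (OG G c).card = 2 * Gr := by rw [OG_card, hG]
  have h3 : ∑ p ∈ OG G c, (ncn G p.1 p.2) ^ 2 ≤ 4 * (R * B) := by
    calc ∑ p ∈ OG G c, (ncn G p.1 p.2) ^ 2 ≤ 4 * (Qd G c).card := sum_sq_le G c hall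
      _ ≤ 4 * (R * B) := by
          have := Qd_card_le G c hall
          rw [← hR, ← hB] at this
          omega
  have key : T ^ 2 ≤ 2 * R * Gr * B := by
    have h4 : (2 * T) ^ 2 ≤ 2 * Gr * (4 * (R * B)) := by
      rw [← h1]
      calc (OT G c).card ^ 2 ≤ (OG G c).card * ∑ p ∈ OG G c, (ncn G p.1 p.2) ^ 2 := cauchy
        _ ≤ (OG G c).card * (4 * (R * B)) := Nat.mul_le_mul_left _ h3
        _ = 2 * Gr * (4 * (R * B)) := by rw [h2]
    nlinarith
  apply Real.le_sqrt_of_sq_le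
  have : (T : ℝ) ^ 2 ≤ ((2 * R * Gr * B : ℕ) : ℝ) := by
    rw [← Nat.cast_pow]
    exact_mod_cast key
  push_cast at this
  convert this using 2 <;> push_cast <;> ring
end
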